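/- Let q ∈ (−1,0). Then μ_q is a probability measure on ℝ, the topological support of μ_q equals the interval [−2,2], and μ_q has no atoms, i.e. μ_q({x}) = 0 for every x ∈ ℝ. -/

import Mathlib

open MeasureTheory

/-- `c q r` for `r ≥ 1`: the Fourier coefficient `q^(r-1)(1+q)^2/((1+q^(r+1))(1+q^(r-1)))`. -/
noncomputable def circCoeff (q : ℝ) (r : ℕ) : ℝ :=
  q ^ (r - 1) * (1 + q) ^ 2 / ((1 + q ^ (r + 1)) * (1 + q ^ (r - 1)))

/-- The circular density `F_q(t) = 1 + 2 ∑_{r≥1} (-1)^r c_r(q) cos(2rt)`. -/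
noncomputable def circDensity (q : ℝ) (t : ℝ) : ℝ :=
  1 + 2 * ∑' r : ℕ, (-1 : ℝ) ^ (r + 1) * circCoeff q (r + 1) * Real.cos (2 * (r + 1) * t)

/-- The measure `μ_q`: pushforward under `t ↦ 2 cos t` of the measure on `[0, 2π]`
with density `F_q(t)/(2π)`. -/
noncomputable def muQ (q : ℝ) : Measure ℝ :=
  Measure.map (fun t => 2 * Real.cos t)
    ((volume.restrict (Set.Icc 0 (2 * Real.pi))).withDensity
      (fun t => ENNReal.ofReal (circDensity q t / (2 * Real.pi))))

open Real

lemma habs {q : ℝ} (hq : q ∈ Set.Ioo (-1 : ℝ) 0) : |q| < 1 :=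
  abs_lt.2 ⟨hq.1, hq.2.trans one_pos⟩

lemma denom_pos {q : ℝ} (hq : q ∈ Set.Ioo (-1 : ℝ) 0) (k : ℕ) : 0 < 1 + q ^ k := by
  have h : |q ^ k| ≤ 1 := by
    rw [abs_pow]; exact pow_le_one₀ (abs_nonneg q) (habs hq).le
  have := neg_abs_le (q ^ k)
  rcases eq_or_lt_of_le h with h' | h'
  · -- |q^k|=1 forces k = 0 since |q|<1
    rcases Nat.eq_zero_or_pos k with rfl | hk
    · norm_num
    · exfalso
      have : |q ^ k| < 1 := by
        rw [abs_pow]; exact pow_lt_one₀ (abs_nonneg q) (habs hq) hk.ne'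
      linarith
  · linarith

lemma coeff_eq {q : ℝ} (hq : q ∈ Set.Ioo (-1 : ℝ) 0) (r : ℕ) :
    (-1 : ℝ) ^ (r + 1) * circCoeff q (r + 1)
      = -(|q| ^ r * (1 + q) ^ 2 / ((1 + q ^ (r + 2)) * (1 + q ^ r))) := by
  have h1 : q ^ r = (-1 : ℝ) ^ r * |q| ^ r := by
    rw [abs_of_neg hq.2, ← mul_pow]; norm_num
  simp only [circCoeff, Nat.add_sub_cancel]
  rw [h1]
  rcases Nat.even_or_odd r with he | ho
  · rw [he.neg_one_pow, (he.add_one).neg_one_pow]; ring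
  · rw [ho.neg_one_pow, (Odd.add_one ho).neg_one_pow]; ring

noncomputable def dd (q : ℝ) (r : ℕ) : ℝ :=
  |q| ^ r * (1 + q) ^ 2 / ((1 + q ^ (r + 2)) * (1 + q ^ r))

lemma dd_nonneg {q : ℝ} (hq : q ∈ Set.Ioo (-1 : ℝ) 0) (r : ℕ) : 0 ≤ dd q r := by
  have h1 := denom_pos hq (r + 2); have h2 := denom_pos hq r
  have h : (0:ℝ) ≤ |q| ^ r * (1 + q) ^ 2 := by positivity
  exact div_nonneg h (by positivity)

lemma dd_pos0 {q : ℝ} (hq : q ∈ Set.Ioo (-1 : ℝ) 0) : 0 < dd q 0 := by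
  have h1 := denom_pos hq 2; have h2 := denom_pos hq 0
  have h3 : 0 < (1 + q) ^ 2 := by nlinarith [hq.1]
  have : dd q 0 = (1 + q) ^ 2 / ((1 + q ^ 2) * (1 + q ^ 0)) := by simp [dd]
  rw [this]; positivity

lemma denom_lb {q : ℝ} (hq : q ∈ Set.Ioo (-1 : ℝ) 0) (k : ℕ) : 1 - |q| ≤ 1 + q ^ k := by
  rcases Nat.eq_zero_or_pos k with rfl | hk
  · simp; linarith [abs_nonneg q]
  · have h1 : |q ^ k| ≤ |q| := by
      rw [abs_pow]; exact pow_le_of_le_one (abs_nonneg q) (habs hq).le hk.ne'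
    have h2 := neg_abs_le (q ^ k)
    linarith

lemma dd_le {q : ℝ} (hq : q ∈ Set.Ioo (-1 : ℝ) 0) (r : ℕ) :
    dd q r ≤ (1 + q) ^ 2 / (1 - |q|) ^ 2 * |q| ^ r := by
  have hone : 0 < 1 - |q| := by linarith [habs hq]
  have h1 := denom_lb hq (r + 2); have h2 := denom_lb hq r
  have hd1 := denom_pos hq (r + 2); have hd2 := denom_pos hq r
  have key : (1 - |q|) ^ 2 ≤ (1 + q ^ (r + 2)) * (1 + q ^ r) := by nlinarith
  calc dd q r ≤ |q| ^ r * (1 + q) ^ 2 / (1 - |q|) ^ 2 := by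
        exact div_le_div_of_nonneg_left (by positivity) (by positivity) key
    _ = (1 + q) ^ 2 / (1 - |q|) ^ 2 * |q| ^ r := by ring

lemma dd_summable {q : ℝ} (hq : q ∈ Set.Ioo (-1 : ℝ) 0) : Summable (dd q) :=
  Summable.of_nonneg_of_le (dd_nonneg hq) (dd_le hq)
    ((summable_geometric_of_lt_one (abs_nonneg q) (habs hq)).mul_left _)

lemma dd_hasSum {q : ℝ} (hq : q ∈ Set.Ioo (-1 : ℝ) 0) : HasSum (dd q) (1 / 2) := by
  set a : ℕ → ℝ := fun k => (1 + q ^ k)⁻¹ with ha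
  set w : ℕ → ℝ := fun r => (-1 : ℝ) ^ r * (a r - a (r + 1)) with hw
  have hne : ∀ k : ℕ, (1 + q ^ k) ≠ 0 := fun k => (denom_pos hq k).ne'
  have hq1 : q - 1 ≠ 0 := by intro h; nlinarith [hq.2]
  have tele_id : ∀ P : ℝ, 1 + P ≠ 0 → 1 + q * (q * P) ≠ 0 →
      P * (1 + q) ^ 2 / ((1 + q * (q * P)) * (1 + P))
        = (1 + q) / (q - 1) * ((1 + P)⁻¹ - (1 + q * (q * P))⁻¹) := by
    intro P h0 h2
    rw [inv_sub_inv h0 h2]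
    field_simp
    ring
  have tele : ∀ r : ℕ, dd q r = ((1 + q) / (q - 1)) * (w r - w (r + 1)) := by
    intro r
    have hc : circCoeff q (r + 1) = (1 + q) / (q - 1) * (a r - a (r + 2)) := by
      simp only [circCoeff, Nat.add_sub_cancel, ha,
        show (r + 1) + 1 = r + 2 from rfl,
        show q ^ (r + 2) = q * (q * q ^ r) by ring]
      exact tele_id (q ^ r) (hne r)
        (by have := hne (r + 2); rwa [show q ^ (r+2) = q * (q * q ^ r) by ring] at this)
    have h1 : dd q r = (-1 : ℝ) ^ r * circCoeff q (r + 1) := by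
      have h : dd q r = -((-1 : ℝ) ^ (r + 1) * circCoeff q (r + 1)) := by
        rw [coeff_eq hq]; simp [dd]
      rw [h, pow_succ]; ring
    have step : w r - w (r + 1) = (-1 : ℝ) ^ r * (a r - a (r + 2)) := by
      simp only [hw, show (r + 1) + 1 = r + 2 from rfl, pow_succ]
      ring
    rw [h1, hc, step]
    ring
  have hlim : Filter.Tendsto w Filter.atTop (nhds 0) := by
    have hq0 : Filter.Tendsto (fun r : ℕ => q ^ r) Filter.atTop (nhds 0) :=
      tendsto_pow_atTop_nhds_zero_of_abs_lt_one (habs hq)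
    have haa : Filter.Tendsto a Filter.atTop (nhds 1) := by
      have : Filter.Tendsto (fun r : ℕ => (1 + q ^ r)⁻¹) Filter.atTop (nhds ((1 + 0)⁻¹)) :=
        ((hq0.const_add 1)).inv₀ (by norm_num)
      simpa using this
    have hd : Filter.Tendsto (fun r => a r - a (r + 1)) Filter.atTop (nhds 0) := by
      have h2 : Filter.Tendsto (fun r : ℕ => a (r + 1)) Filter.atTop (nhds 1) :=
        haa.comp (Filter.tendsto_add_atTop_nat 1)
      simpa using haa.sub h2
    refine squeeze_zero_norm (fun r => ?_) (by simpa using hd.norm)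
    simp only [hw, norm_mul, norm_pow, norm_neg, norm_one, one_pow, one_mul, Real.norm_eq_abs, le_refl]
  have hps : Filter.Tendsto (fun n => ∑ r ∈ Finset.range n, dd q r) Filter.atTop
      (nhds (((1 + q) / (q - 1)) * (w 0 - 0))) := by
    have h : ∀ n, ∑ r ∈ Finset.range n, dd q r = ((1 + q) / (q - 1)) * (w 0 - w n) := by
      intro n
      rw [← Finset.sum_range_sub' w n, Finset.mul_sum]
      exact Finset.sum_congr rfl fun r _ => tele r
    simp only [h]
    exact (tendsto_const_nhds.sub hlim).const_mul _
  have hval : ((1 + q) / (q - 1)) * (w 0 - 0) = 1 / 2 := by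
    have h0 := hne 0; have h1 := hne 1
    simp only [hw, ha, pow_zero, zero_add, pow_one, one_mul, sub_zero]
    simp only [pow_zero, pow_one] at h0 h1
    field_simp
    ring
  have hs := (dd_summable hq).hasSum
  have h2 := hs.tendsto_sum_nat
  rw [← hval]
  rwa [tendsto_nhds_unique h2 hps] at hs

lemma summand_eq {q : ℝ} (hq : q ∈ Set.Ioo (-1 : ℝ) 0) (t : ℝ) (r : ℕ) :
    (-1 : ℝ) ^ (r + 1) * circCoeff q (r + 1) * Real.cos (2 * (r + 1) * t)
      = -(dd q r * Real.cos (2 * (r + 1) * t)) := by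
  rw [coeff_eq hq]; simp [dd]

lemma summable_cos {q : ℝ} (hq : q ∈ Set.Ioo (-1 : ℝ) 0) (t : ℝ) :
    Summable (fun r : ℕ => dd q r * Real.cos (2 * (r + 1) * t)) := by
  refine Summable.of_norm_bounded (dd_summable hq) (fun r => ?_)
  rw [norm_mul, Real.norm_eq_abs, Real.norm_eq_abs, abs_of_nonneg (dd_nonneg hq r)]
  calc dd q r * |Real.cos (2 * (r + 1) * t)| ≤ dd q r * 1 :=
        mul_le_mul_of_nonneg_left (Real.abs_cos_le_one _) (dd_nonneg hq r)
    _ = dd q r := mul_one _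

lemma summable_oneSub {q : ℝ} (hq : q ∈ Set.Ioo (-1 : ℝ) 0) (t : ℝ) :
    Summable (fun r : ℕ => dd q r * (1 - Real.cos (2 * (r + 1) * t))) := by
  have h := (dd_summable hq).sub (summable_cos hq t)
  refine h.congr fun r => by ring

lemma F_repr {q : ℝ} (hq : q ∈ Set.Ioo (-1 : ℝ) 0) (t : ℝ) :
    circDensity q t = 2 * ∑' r : ℕ, dd q r * (1 - Real.cos (2 * (r + 1) * t)) := by
  rw [circDensity]
  rw [tsum_congr (summand_eq hq t)]
  rw [tsum_neg]
  have h1 : ∑' r : ℕ, dd q r * (1 - Real.cos (2 * (r + 1) * t))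
      = (∑' r : ℕ, dd q r) - ∑' r : ℕ, dd q r * Real.cos (2 * (r + 1) * t) := by
    rw [← Summable.tsum_sub (dd_summable hq) (summable_cos hq t)]
    exact tsum_congr fun r => by ring
  rw [h1, (dd_hasSum hq).tsum_eq]
  ring

lemma F_nonneg {q : ℝ} (hq : q ∈ Set.Ioo (-1 : ℝ) 0) (t : ℝ) : 0 ≤ circDensity q t := by
  rw [F_repr hq]
  have : 0 ≤ ∑' r : ℕ, dd q r * (1 - Real.cos (2 * (r + 1) * t)) :=
    tsum_nonneg fun r => mul_nonneg (dd_nonneg hq r)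
      (by linarith [Real.cos_le_one (2 * (r + 1) * t)])
  linarith

lemma F_lb {q : ℝ} (hq : q ∈ Set.Ioo (-1 : ℝ) 0) (t : ℝ) :
    2 * (dd q 0 * (1 - Real.cos (2 * t))) ≤ circDensity q t := by
  rw [F_repr hq]
  have h0 : dd q 0 * (1 - Real.cos (2 * ((0:ℕ) + 1) * t))
      ≤ ∑' r : ℕ, dd q r * (1 - Real.cos (2 * (r + 1) * t)) :=
    Summable.le_tsum (summable_oneSub hq t) 0 fun r _ =>
      mul_nonneg (dd_nonneg hq r) (by linarith [Real.cos_le_one (2 * (r + 1) * t)])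
  norm_num at h0
  linarith

lemma F_cont_inner {q : ℝ} (hq : q ∈ Set.Ioo (-1 : ℝ) 0) : (Continuous (fun t : ℝ =>
      ∑' r : ℕ, (-1 : ℝ) ^ (r + 1) * circCoeff q (r + 1) * Real.cos (2 * (r + 1) * t))) := by
    refine continuous_tsum (fun r => by fun_prop)
      (((summable_geometric_of_lt_one (abs_nonneg q) (habs hq)).mul_left
        ((1 + q) ^ 2 / (1 - |q|) ^ 2))) (fun r t => ?_)
    rw [summand_eq hq t r, norm_neg, norm_mul, Real.norm_eq_abs, Real.norm_eq_abs,
      abs_of_nonneg (dd_nonneg hq r)]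
    calc dd q r * |Real.cos (2 * (r + 1) * t)| ≤ dd q r * 1 :=
          mul_le_mul_of_nonneg_left (Real.abs_cos_le_one _) (dd_nonneg hq r)
      _ = dd q r := mul_one _
      _ ≤ _ := dd_le hq r

lemma F_cont {q : ℝ} (hq : q ∈ Set.Ioo (-1 : ℝ) 0) : Continuous (circDensity q) := by
  have := F_cont_inner hq
  unfold circDensity
  fun_prop

lemma cos_int : ∀ r : ℕ, ∫ t in Set.Icc (0:ℝ) (2 * π), Real.cos (2 * (r + 1) * t) = 0 := by
  intro r
  have h2π : (0:ℝ) ≤ 2 * π := by positivity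
  have hc : (2 * ((r:ℝ) + 1)) ≠ 0 := by positivity
  rw [MeasureTheory.integral_Icc_eq_integral_Ioc,
    ← intervalIntegral.integral_of_le h2π]
  have := intervalIntegral.integral_comp_mul_left (a := (0:ℝ)) (b := 2 * π)
    (fun x => Real.cos x) hc
  simp only [mul_zero] at this
  rw [this, integral_cos]
  have : (2 * ((r:ℝ) + 1) * (2 * π)) = ((4 * (r + 1) : ℕ) : ℝ) * π := by push_cast; ring
  rw [this, Real.sin_nat_mul_pi, Real.sin_zero]
  simp

lemma F_integral {q : ℝ} (hq : q ∈ Set.Ioo (-1 : ℝ) 0) :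
    ∫ t in Set.Icc (0:ℝ) (2 * π), circDensity q t = 2 * π := by
  have hμ : volume (Set.Icc (0:ℝ) (2 * π)) = ENNReal.ofReal (2 * π) := by
    rw [Real.volume_Icc]; norm_num
  set μ := volume.restrict (Set.Icc (0:ℝ) (2 * π)) with hμdef
  have hsum_int : ∫ t, (∑' r : ℕ, (-1 : ℝ) ^ (r + 1) * circCoeff q (r + 1)
      * Real.cos (2 * (r + 1) * t)) ∂μ
      = ∑' r : ℕ, ∫ t, (-1 : ℝ) ^ (r + 1) * circCoeff q (r + 1)
      * Real.cos (2 * (r + 1) * t) ∂μ := by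
    refine integral_tsum (fun r => (Continuous.aestronglyMeasurable (by fun_prop))) ?_
    have hb : ∀ r : ℕ, ∫⁻ t, ‖(-1 : ℝ) ^ (r + 1) * circCoeff q (r + 1)
        * Real.cos (2 * (r + 1) * t)‖₊ ∂μ ≤ ENNReal.ofReal (dd q r * (2 * π)) := by
      intro r
      have hbd : ∀ t : ℝ, (‖(-1 : ℝ) ^ (r + 1) * circCoeff q (r + 1)
          * Real.cos (2 * (r + 1) * t)‖₊ : ENNReal) ≤ ENNReal.ofReal (dd q r) := by
        intro t
        rw [← enorm_eq_nnnorm, ← ofReal_norm]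
        refine ENNReal.ofReal_le_ofReal ?_
        rw [summand_eq hq t r, norm_neg, norm_mul, Real.norm_eq_abs, Real.norm_eq_abs,
          abs_of_nonneg (dd_nonneg hq r)]
        calc dd q r * |Real.cos (2 * (r + 1) * t)| ≤ dd q r * 1 :=
              mul_le_mul_of_nonneg_left (Real.abs_cos_le_one _) (dd_nonneg hq r)
          _ = dd q r := mul_one _
      calc ∫⁻ t, ‖(-1 : ℝ) ^ (r + 1) * circCoeff q (r + 1)
            * Real.cos (2 * (r + 1) * t)‖₊ ∂μ
          ≤ ∫⁻ _, ENNReal.ofReal (dd q r) ∂μ := lintegral_mono hbd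
        _ = ENNReal.ofReal (dd q r) * μ Set.univ := lintegral_const _
        _ = ENNReal.ofReal (dd q r * (2 * π)) := by
            rw [hμdef, Measure.restrict_apply MeasurableSet.univ, Set.univ_inter, hμ,
              ENNReal.ofReal_mul (dd_nonneg hq r)]
    refine ne_top_of_le_ne_top ?_ (ENNReal.tsum_le_tsum hb)
    rw [← ENNReal.ofReal_tsum_of_nonneg (fun r => mul_nonneg (dd_nonneg hq r) (by positivity))
      (((dd_summable hq)).mul_right (2 * π))]
    exact ENNReal.ofReal_ne_top
  have hzero : ∀ r : ℕ, ∫ t, (-1 : ℝ) ^ (r + 1) * circCoeff q (r + 1)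
      * Real.cos (2 * (r + 1) * t) ∂μ = 0 := by
    intro r
    rw [integral_const_mul, cos_int r, mul_zero]
  have hcirc : ∀ t : ℝ, circDensity q t = 1 + 2 * ∑' r : ℕ,
      (-1 : ℝ) ^ (r + 1) * circCoeff q (r + 1) * Real.cos (2 * (r + 1) * t) := fun t => rfl
  simp only [hcirc]
  rw [integral_add, integral_const_mul, hsum_int]
  · simp only [hzero, tsum_zero, mul_zero, add_zero]
    simp [hμdef, hμ, Real.pi_nonneg, ENNReal.toReal_ofReal, mul_nonneg]
  · exact integrableOn_const (by rw [hμ]; exact ENNReal.ofReal_ne_top)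
  · exact ((F_cont_inner hq).integrableOn_Icc).const_mul 2


/-- `μ_q` is a probability measure, its topological support (the set of points all of whose
open neighbourhoods have positive measure) is `[-2, 2]`, and it has no atoms. -/
theorem stmt4 (q : ℝ) (hq : q ∈ Set.Ioo (-1 : ℝ) 0) :
    IsProbabilityMeasure (muQ q) ∧
    {x : ℝ | ∀ U : Set ℝ, IsOpen U → x ∈ U → 0 < muQ q U} = Set.Icc (-2 : ℝ) 2 ∧
    (∀ x : ℝ, muQ q {x} = 0) := by
  have hπ : (0:ℝ) < π := Real.pi_pos
  set g : ℝ → ENNReal := fun t => ENNReal.ofReal (circDensity q t / (2 * π)) with hg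
  set ν : Measure ℝ := (volume.restrict (Set.Icc 0 (2 * π))).withDensity g with hν
  have hmeas : Measurable (fun t : ℝ => 2 * Real.cos t) := by fun_prop
  have hmap : ∀ S : Set ℝ, MeasurableSet S →
      muQ q S = ν ((fun t => 2 * Real.cos t) ⁻¹' S) := by
    intro S hS
    rw [muQ, Measure.map_apply hmeas hS]
  have hν_apply : ∀ S : Set ℝ, MeasurableSet S →
      ν S = ∫⁻ t, g t ∂(volume.restrict (S ∩ Set.Icc 0 (2 * π))) := by
    intro S hS
    rw [hν, withDensity_apply g hS, Measure.restrict_restrict hS]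
  -- Probability
  have hprob : IsProbabilityMeasure (muQ q) := by
    constructor
    rw [hmap _ MeasurableSet.univ, Set.preimage_univ, hν_apply _ MeasurableSet.univ,
      Set.univ_inter]
    have hint : IntegrableOn (fun t => circDensity q t / (2 * π))
        (Set.Icc (0:ℝ) (2 * π)) volume := ((F_cont hq).div_const _).integrableOn_Icc
    rw [hg, ← ofReal_integral_eq_lintegral_ofReal hint
      (Filter.Eventually.of_forall fun t => div_nonneg (F_nonneg hq t) (by positivity))]
    rw [integral_div, F_integral hq, div_self (by positivity)]
    simp
  refine ⟨hprob, ?_, ?_⟩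
  · -- support
    ext x
    simp only [Set.mem_setOf_eq, Set.mem_Icc]
    constructor
    · intro hx
      by_contra hcon
      have hopen : IsOpen (Set.Icc (-2:ℝ) 2)ᶜ := isClosed_Icc.isOpen_compl
      have hxU : x ∈ (Set.Icc (-2:ℝ) 2)ᶜ := by
        simp only [Set.mem_compl_iff, Set.mem_Icc]; exact fun h => hcon ⟨h.1, h.2⟩
      have h0 := hx _ hopen hxU
      rw [hmap _ hopen.measurableSet] at h0
      have : (fun t => 2 * Real.cos t) ⁻¹' (Set.Icc (-2:ℝ) 2)ᶜ = ∅ := by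
        ext t
        simp only [Set.mem_preimage, Set.mem_compl_iff, Set.mem_Icc, Set.mem_empty_iff_false,
          iff_false, not_not]
        constructor <;> nlinarith [Real.cos_le_one t, Real.neg_one_le_cos t]
      rw [this] at h0
      simp at h0
    · rintro ⟨h1, h2⟩ U hU hxU
      -- t₀ = arccos (x/2)
      have hx1 : -1 ≤ x / 2 := by linarith
      have hx2 : x / 2 ≤ 1 := by linarith
      have hcos : 2 * Real.cos (Real.arccos (x / 2)) = x := by
        rw [Real.cos_arccos hx1 hx2]; ring
      set t₀ := Real.arccos (x / 2) with ht₀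
      have hVopen : IsOpen ((fun t => 2 * Real.cos t) ⁻¹' U) :=
        hU.preimage (by fun_prop)
      have ht₀V : t₀ ∈ (fun t => 2 * Real.cos t) ⁻¹' U := by
        simp only [Set.mem_preimage, hcos]; exact hxU
      -- t₀ ∈ closure (Ioo 0 π)
      have ht₀cl : t₀ ∈ closure (Set.Ioo (0:ℝ) π) := by
        rw [closure_Ioo hπ.ne]
        exact ⟨Real.arccos_nonneg _, Real.arccos_le_pi _⟩
      have hWne : (((fun t => 2 * Real.cos t) ⁻¹' U) ∩ Set.Ioo 0 π).Nonempty :=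
        mem_closure_iff.1 ht₀cl _ hVopen ht₀V
      set W := ((fun t => 2 * Real.cos t) ⁻¹' U) ∩ Set.Ioo 0 π with hW
      have hWopen : IsOpen W := hVopen.inter isOpen_Ioo
      have hWsub : W ⊆ Set.Icc 0 (2 * π) := fun t ht =>
        ⟨ht.2.1.le, by nlinarith [ht.2.2]⟩
      rw [hmap _ hU.measurableSet]
      refine lt_of_lt_of_le ?_ (measure_mono (Set.inter_subset_left (t := Set.Ioo 0 π)))
      rw [hν_apply _ hWopen.measurableSet, Set.inter_eq_left.2 hWsub]
      -- lower bound by h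
      set h : ℝ → ENNReal := fun t =>
        ENNReal.ofReal (2 * (dd q 0 * (1 - Real.cos (2 * t))) / (2 * π)) with hh
      have hle : ∀ t, h t ≤ g t := fun t =>
        ENNReal.ofReal_le_ofReal (div_le_div_of_nonneg_right (F_lb hq t) (by positivity))
      refine lt_of_lt_of_le ?_ (lintegral_mono hle)
      have hhm : Measurable h := by
        apply Measurable.ennreal_ofReal; fun_prop
      rw [lintegral_pos_iff_support hhm]
      have hsupp : W ⊆ Function.support h := by
        intro t ht
        have h2t1 : Real.cos (2 * t) < 1 := by
          rcases lt_or_ge (Real.cos (2*t)) 1 with h | h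
          · exact h
          · exfalso
            have he : Real.cos (2 * t) = 1 := le_antisymm (Real.cos_le_one _) h
            have := (Real.cos_eq_one_iff_of_lt_of_lt
              (by nlinarith [ht.2.1, ht.2.2]) (by nlinarith [ht.2.1, ht.2.2])).1 he
            nlinarith [ht.2.1]
        have : 0 < 2 * (dd q 0 * (1 - Real.cos (2 * t))) / (2 * π) := by
          have hd0 := dd_pos0 hq
          have hc0 : 0 < 1 - Real.cos (2 * t) := by linarith
          exact div_pos (by nlinarith) (by positivity)
        simp only [Function.mem_support, hh]
        exact fun hc => by simp [ENNReal.ofReal_eq_zero] at hc; linarith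
      calc (0:ENNReal) < volume W := hWopen.measure_pos volume hWne
        _ = (volume.restrict W) (Function.support h) := by
            rw [Measure.restrict_apply' hWopen.measurableSet, Set.inter_eq_right.2 hsupp]
  · -- no atoms
    intro x
    rw [hmap _ (measurableSet_singleton x), hν_apply _ (hmeas (measurableSet_singleton x))]
    have hnull : volume (((fun t => 2 * Real.cos t) ⁻¹' {x}) ∩ Set.Icc 0 (2 * π)) = 0 := by
      have hsub : ((fun t => 2 * Real.cos t) ⁻¹' {x}) ∩ Set.Icc 0 (2 * π)
          ⊆ ({Real.arccos (x/2), 2*π - Real.arccos (x/2)} : Set ℝ) := by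
        rintro t ⟨ht1, ht2⟩
        simp only [Set.mem_preimage, Set.mem_singleton_iff] at ht1
        have hcx : Real.cos t = x / 2 := by linarith
        rcases le_total t π with h | h
        · left
          rw [← hcx, Real.arccos_cos ht2.1 h]
        · right
          have h1 : Real.cos (2 * π - t) = x / 2 := by rw [Real.cos_two_pi_sub, hcx]
          have h2 : 0 ≤ 2 * π - t := by linarith [ht2.2]
          have h3 : 2 * π - t ≤ π := by linarith
          have : Real.arccos (x / 2) = 2 * π - t := by rw [← h1, Real.arccos_cos h2 h3]
          simp only [Set.mem_singleton_iff, this]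
          ring
      exact measure_mono_null hsub
        (((Set.countable_singleton _).insert _).measure_zero _)
    rw [Measure.restrict_eq_zero.2 hnull]
    simp
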